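/- The mean-squared error of the doubly robust mean estimator satisfies E[(θ* − θ̂_DR)²] ≤ 2·(((m+2n)/((m+n)·n))·Var[f̂(X_1) − Y_1] + (1/(m+n))·Var[Y_1]). -/

import Mathlib

open MeasureTheory ProbabilityTheory Finset

/-- The mean-squared error of the doubly robust mean estimator satisfies
`E[(θ* − θ̂_DR)²] ≤ 2·(((m+2n)/((m+n)·n))·Var[f̂(X_1) − Y_1] + (1/(m+n))·Var[Y_1])`. -/
theorem doubly_robust_mean_estimator_mse_upper_residual
    {Ω : Type*} [MeasurableSpace Ω] (μ : Measure Ω) [IsProbabilityMeasure μ]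
    {𝒳 : Type*} [MeasurableSpace 𝒳]
    (m n : ℕ) (hm : 0 < m) (hn : 0 < n)
    (X : Fin (m + n) → Ω → 𝒳) (Y : Fin (m + n) → Ω → ℝ)
    (hXmeas : ∀ i, Measurable (X i)) (hYmeas : ∀ i, Measurable (Y i))
    (h_indep : iIndepFun
      (fun i ω => (X i ω, Y i ω)) μ)
    (h_ident : ∀ i : Fin (m + n),
      IdentDistrib (fun ω => (X i ω, Y i ω))
        (fun ω => (X ⟨0, by omega⟩ ω, Y ⟨0, by omega⟩ ω)) μ μ)
    (f : 𝒳 → ℝ) (hf : Measurable f)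
    (hY2 : MemLp (Y ⟨0, by omega⟩) 2 μ)
    (hfX2 : MemLp (fun ω => f (X ⟨0, by omega⟩ ω)) 2 μ) :
    ∫ ω, ((∫ ω', Y ⟨0, by omega⟩ ω' ∂μ)
        - ((1 / (m + n : ℝ)) * (∑ i : Fin (m + n), f (X i ω))
          - (1 / (n : ℝ)) * ∑ i ∈ Finset.univ.filter (fun i : Fin (m + n) => m ≤ (i : ℕ)),
              (f (X i ω) - Y i ω))) ^ 2 ∂μ
      ≤ 2 * (((m + 2 * n : ℝ) / ((m + n : ℝ) * n)) *
            (∫ ω, ((f (X ⟨0, by omega⟩ ω) - Y ⟨0, by omega⟩ ω)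
              - ∫ ω', (f (X ⟨0, by omega⟩ ω') - Y ⟨0, by omega⟩ ω') ∂μ) ^ 2 ∂μ)
          + (1 / (m + n : ℝ)) *
            ∫ ω, (Y ⟨0, by omega⟩ ω - ∫ ω', Y ⟨0, by omega⟩ ω' ∂μ) ^ 2 ∂μ) := by
  have hm' : (0:ℝ) < m := by exact_mod_cast hm
  have hn' : (0:ℝ) < n := by exact_mod_cast hn
  have hmn' : (0:ℝ) < (m:ℝ) + n := by linarith
  set i0 : Fin (m + n) := ⟨0, by omega⟩ with hi0
  set g : Fin (m + n) → Ω → ℝ := fun i ω => f (X i ω) - Y i ω with hgdef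
  have hident_g : ∀ i, IdentDistrib (g i) (g i0) μ μ := fun i =>
    (h_ident i).comp ((hf.comp measurable_fst).sub measurable_snd)
  have hident_Y : ∀ i, IdentDistrib (Y i) (Y i0) μ μ := fun i =>
    (h_ident i).comp measurable_snd
  have hg0 : MemLp (g i0) 2 μ := hfX2.sub hY2
  have hg2 : ∀ i, MemLp (g i) 2 μ := fun i => (hident_g i).memLp_iff.2 hg0
  have hY2' : ∀ i, MemLp (Y i) 2 μ := fun i => (hident_Y i).memLp_iff.2 hY2
  set θ : ℝ := ∫ ω, Y i0 ω ∂μ with hθ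
  set ν : ℝ := ∫ ω, g i0 ω ∂μ with hν
  set c : Fin (m + n) → ℝ :=
    fun i => if m ≤ (i : ℕ) then 1/((m:ℝ)+n) - 1/n else 1/((m:ℝ)+n) with hc
  set d : ℝ := 1/((m:ℝ)+n) with hd
  set A : Ω → ℝ := ∑ i : Fin (m+n), fun ω => c i * g i ω with hA
  set B : Ω → ℝ := ∑ i : Fin (m+n), fun ω => d * Y i ω with hB
  have hAmem : MemLp A 2 μ := memLp_finset_sum' _ fun i _ => (hg2 i).const_mul _
  have hBmem : MemLp B 2 μ := memLp_finset_sum' _ fun i _ => (hY2' i).const_mul _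
  have hgint : ∀ i, Integrable (g i) μ := fun i => (hg2 i).integrable one_le_two
  have hYint : ∀ i, Integrable (Y i) μ := fun i => (hY2' i).integrable one_le_two
  -- cardinalities
  have hcard1 : ((univ : Finset (Fin (m+n))).filter fun i : Fin (m+n) => m ≤ (i:ℕ)).card = n := by
    have h1 : ((univ : Finset (Fin (m+n))).filter fun i : Fin (m+n) => m ≤ (i:ℕ))
        = Finset.Ici (⟨m, by omega⟩ : Fin (m+n)) := by
      ext i; simp [Fin.le_def]
    rw [h1, Fin.card_Ici]
    simp
  have hcard2 : ((univ : Finset (Fin (m+n))).filter fun i : Fin (m+n) => ¬ m ≤ (i:ℕ)).card = m := by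
    have h2 := Finset.card_filter_add_card_filter_not
      (s := (univ : Finset (Fin (m+n)))) (p := fun i : Fin (m+n) => m ≤ (i:ℕ))
    simp only [Finset.card_univ, Fintype.card_fin, hcard1] at h2
    omega
  have hsumc : ∑ i : Fin (m+n), c i = 0 := by
    rw [hc, Finset.sum_ite, Finset.sum_const, Finset.sum_const, hcard1, hcard2,
      nsmul_eq_mul, nsmul_eq_mul, hd]
    field_simp
    ring
  have hsumc2 : ∑ i : Fin (m+n), (c i)^2 = m / (((m:ℝ)+n) * n) := by
    rw [hc]
    simp only [apply_ite (fun x : ℝ => x^2)]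
    rw [Finset.sum_ite, Finset.sum_const, Finset.sum_const, hcard1, hcard2,
      nsmul_eq_mul, nsmul_eq_mul, hd]
    field_simp
    ring
  -- means
  have hintA : ∫ ω, A ω ∂μ = 0 := by
    have : ∫ ω, A ω ∂μ = ∑ i : Fin (m+n), ∫ ω, c i * g i ω ∂μ := by
      rw [hA]
      simp only [Finset.sum_apply]
      exact integral_finset_sum _ fun i _ => (hgint i).const_mul _
    rw [this]
    have heach : ∀ i : Fin (m+n), ∫ ω, c i * g i ω ∂μ = c i * ν := by
      intro i
      rw [integral_const_mul, hν, (hident_g i).integral_eq]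
    rw [Finset.sum_congr rfl fun i _ => heach i, ← Finset.sum_mul, hsumc, zero_mul]
  have hintB : ∫ ω, B ω ∂μ = θ := by
    have : ∫ ω, B ω ∂μ = ∑ i : Fin (m+n), ∫ ω, d * Y i ω ∂μ := by
      rw [hB]
      simp only [Finset.sum_apply]
      exact integral_finset_sum _ fun i _ => (hYint i).const_mul _
    rw [this]
    have heach : ∀ i : Fin (m+n), ∫ ω, d * Y i ω ∂μ = d * θ := by
      intro i
      rw [integral_const_mul, hθ, (hident_Y i).integral_eq]
    rw [Finset.sum_congr rfl fun i _ => heach i, Finset.sum_const, Finset.card_univ,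
      Fintype.card_fin, nsmul_eq_mul, hd]
    push_cast
    field_simp
  -- variances
  have hpair_g : Set.Pairwise ↑(univ : Finset (Fin (m+n)))
      fun i j => IndepFun (fun ω => c i * g i ω) (fun ω => c j * g j ω) μ := by
    intro i _ j _ hij
    exact (h_indep.indepFun hij).comp
      (measurable_const.mul ((hf.comp measurable_fst).sub measurable_snd))
      (measurable_const.mul ((hf.comp measurable_fst).sub measurable_snd))
  have hpair_Y : Set.Pairwise ↑(univ : Finset (Fin (m+n)))
      fun i j => IndepFun (fun ω => d * Y i ω) (fun ω => d * Y j ω) μ := by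
    intro i _ j _ hij
    exact (h_indep.indepFun hij).comp
      (measurable_const.mul measurable_snd) (measurable_const.mul measurable_snd)
  have hvarA : variance A μ = (m / (((m:ℝ)+n)*n)) * variance (g i0) μ := by
    rw [hA, IndepFun.variance_sum (fun i _ => (hg2 i).const_mul _) hpair_g]
    have heach : ∀ i : Fin (m+n),
        variance (fun ω => c i * g i ω) μ = (c i)^2 * variance (g i0) μ := by
      intro i
      have h1 : variance (c i • g i) μ = (c i)^2 * variance (g i) μ := variance_smul _ _ _
      have h2 : (fun ω => c i * g i ω) = c i • g i := rfl
      rw [h2, h1, (hident_g i).variance_eq]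
    rw [Finset.sum_congr rfl fun i _ => heach i, ← Finset.sum_mul, hsumc2]
  have hvarB : variance B μ = (1/((m:ℝ)+n)) * variance (Y i0) μ := by
    rw [hB, IndepFun.variance_sum (fun i _ => (hY2' i).const_mul _) hpair_Y]
    have heach : ∀ i : Fin (m+n),
        variance (fun ω => d * Y i ω) μ = d^2 * variance (Y i0) μ := by
      intro i
      have h1 : variance (d • Y i) μ = d^2 * variance (Y i) μ := variance_smul _ _ _
      have h2 : (fun ω => d * Y i ω) = d • Y i := rfl
      rw [h2, h1, (hident_Y i).variance_eq]
    rw [Finset.sum_congr rfl fun i _ => heach i, Finset.sum_const, Finset.card_univ,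
      Fintype.card_fin, nsmul_eq_mul, hd]
    push_cast
    field_simp
  -- integral forms of variances
  have hintA2 : ∫ ω, (A ω)^2 ∂μ = variance A μ := by
    rw [variance_eq_integral hAmem.1.aemeasurable, hintA]
    simp
  have hintB2 : ∫ ω, (B ω - θ)^2 ∂μ = variance B μ := by
    rw [variance_eq_integral hBmem.1.aemeasurable, hintB]
  have hVg : ∫ ω, (g i0 ω - ν)^2 ∂μ = variance (g i0) μ := by
    rw [variance_eq_integral hg0.1.aemeasurable, hν]
  have hVy : ∫ ω, (Y i0 ω - θ)^2 ∂μ = variance (Y i0) μ := by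
    rw [variance_eq_integral hY2.1.aemeasurable, hθ]
  -- pointwise identity
  have hpoint : ∀ ω, (θ - ((1 / ((m:ℝ) + n)) * (∑ i : Fin (m + n), f (X i ω))
        - (1 / (n : ℝ)) * ∑ i ∈ Finset.univ.filter (fun i : Fin (m + n) => m ≤ (i : ℕ)),
            (f (X i ω) - Y i ω)))
      = -(A ω + (B ω - θ)) := by
    intro ω
    have hAB : A ω + B ω = (1 / ((m:ℝ) + n)) * (∑ i : Fin (m + n), f (X i ω))
        - (1 / (n : ℝ)) * ∑ i ∈ Finset.univ.filter (fun i : Fin (m + n) => m ≤ (i : ℕ)),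
            (f (X i ω) - Y i ω) := by
      rw [hA, hB, Finset.sum_apply, Finset.sum_apply, Finset.mul_sum, Finset.mul_sum,
        Finset.sum_filter, ← Finset.sum_add_distrib, ← Finset.sum_sub_distrib]
      refine Finset.sum_congr rfl fun i _ => ?_
      by_cases him : m ≤ (i:ℕ)
      · simp only [hc, hgdef, hd, him, if_true]; ring
      · simp only [hc, hgdef, hd, him, if_false]; ring
    linarith [hAB]
  have hint1 : Integrable (fun ω => (A ω + (B ω - θ))^2) μ :=
    (hAmem.add (hBmem.sub (memLp_const θ))).integrable_sq
  have hint2 : Integrable (fun ω => 2*(A ω)^2 + 2*(B ω - θ)^2) μ :=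
    ((hAmem.integrable_sq.const_mul 2)).add
      (((hBmem.sub (memLp_const θ)).integrable_sq).const_mul 2)
  calc ∫ ω, (θ - ((1 / ((m:ℝ) + n)) * (∑ i : Fin (m + n), f (X i ω))
        - (1 / (n : ℝ)) * ∑ i ∈ Finset.univ.filter (fun i : Fin (m + n) => m ≤ (i : ℕ)),
            (f (X i ω) - Y i ω)))^2 ∂μ
      = ∫ ω, (A ω + (B ω - θ))^2 ∂μ := by
        refine integral_congr_ae (Filter.Eventually.of_forall fun ω => ?_)
        dsimp only
        rw [hpoint ω, neg_sq]
    _ ≤ ∫ ω, (2*(A ω)^2 + 2*(B ω - θ)^2) ∂μ := by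
        refine integral_mono hint1 hint2 fun ω => ?_
        nlinarith [sq_nonneg (A ω - (B ω - θ))]
    _ = 2 * (∫ ω, (A ω)^2 ∂μ) + 2 * ∫ ω, (B ω - θ)^2 ∂μ := by
        have h1 : Integrable (fun ω => 2*(A ω)^2) μ := hAmem.integrable_sq.const_mul 2
        have h2 : Integrable (fun ω => 2*(B ω - θ)^2) μ :=
          ((hBmem.sub (memLp_const θ)).integrable_sq).const_mul 2
        rw [integral_add h1 h2, integral_const_mul, integral_const_mul]
    _ = 2 * ((m / (((m:ℝ)+n)*n)) * variance (g i0) μ)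
        + 2 * ((1/((m:ℝ)+n)) * variance (Y i0) μ) := by
        rw [hintA2, hintB2, hvarA, hvarB]
    _ ≤ 2 * (((m + 2 * n : ℝ) / (((m:ℝ) + n) * n)) * variance (g i0) μ
        + (1 / ((m:ℝ) + n)) * variance (Y i0) μ) := by
        have hpos : (0:ℝ) < ((m:ℝ)+n)*n := by positivity
        have h1 : (m:ℝ) / (((m:ℝ)+n)*n) ≤ ((m:ℝ) + 2*n) / (((m:ℝ)+n)*n) := by
          gcongr
          linarith
        nlinarith [variance_nonneg (g i0) μ, variance_nonneg (Y i0) μ]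
    _ = 2 * (((m + 2 * n : ℝ) / (((m:ℝ) + n) * n)) *
            (∫ ω, (g i0 ω - ν) ^ 2 ∂μ)
          + (1 / ((m:ℝ) + n)) * ∫ ω, (Y i0 ω - θ) ^ 2 ∂μ) := by
        rw [hVg, hVy]
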